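/- Let n ≥ 3 be odd, k ≥ 0, and 1 ≤ c < 2n(k+1)/(n-3). Any super edge-magic total labeling f of G_{n,k,c} satisfies c(f) ≥ 2n(k+1) + 2c + (n+3)/2, i.e., sm(G_{n,k,c}) ≥ 2n(k+1) + 2c + (n+3)/2. -/

import Mathlib

/-- A super edge-magic total labeling of a graph `G` with `p = Fintype.card V` vertices and
`q = G.edgeSet.ncard` edges: `fv` maps the vertices bijectively onto `{1,…,p}`, `fe` maps the
edges bijectively onto `{p+1,…,p+q}` (so together they form a bijection of `V ∪ E` onto
`{1,…,p+q}` with `f(V) = {1,…,p}`), and every edge `uv` satisfies `f(u)+f(v)+f(uv) = c`. -/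
def IsSEMT {V : Type*} [Fintype V] (G : SimpleGraph V)
    (fv : V → ℕ) (fe : Sym2 V → ℕ) (c : ℕ) : Prop :=
  Set.BijOn fv Set.univ (Set.Icc 1 (Fintype.card V)) ∧
  Set.BijOn fe G.edgeSet
    (Set.Icc (Fintype.card V + 1) (Fintype.card V + G.edgeSet.ncard)) ∧
  ∀ u v, G.Adj u v → fv u + fv v + fe s(u, v) = c

/-- The unicyclic graph `G(n; k₁, …, kₙ)`: a cycle on `Fin n` (vertex `i` adjacent to `i+1 mod n`)
with `k i` pendant vertices attached to the cycle vertex `i`. -/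
def pendantCycle (n : ℕ) (k : Fin n → ℕ) :
    SimpleGraph (Fin n ⊕ Σ i : Fin n, Fin (k i)) :=
  SimpleGraph.fromRel (fun a b =>
    (∃ i j : Fin n, a = Sum.inl i ∧ b = Sum.inl j ∧ (i.val + 1) % n = j.val) ∨
    (∃ (i : Fin n) (j : Fin (k i)), a = Sum.inr ⟨i, j⟩ ∧ b = Sum.inl i))



lemma shift_eq (m : ℕ) (x : ℕ) (hx : x < 2*m+1) :
    (x + (m+1)) % (2*m+1) = if x < m then x + m + 1 else x - m := by
  split
  · exact Nat.mod_eq_of_lt (by omega)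
  · rw [Nat.mod_eq_sub_mod (by omega), Nat.mod_eq_of_lt (by omega)]
    omega

lemma pi_inj (m : ℕ) (a b : ℕ) (ha : a < 2*m+1) (hb : b < 2*m+1)
    (h : (a*(m+1)) % (2*m+1) = (b*(m+1)) % (2*m+1)) : a = b := by
  have h2 : (2*(a*(m+1))) % (2*m+1) = (2*(b*(m+1))) % (2*m+1) := by
    rw [Nat.mul_mod, h, ← Nat.mul_mod]
  have e1 : 2*(a*(m+1)) = a + a*(2*m+1) := by ring
  have e2 : 2*(b*(m+1)) = b + b*(2*m+1) := by ring
  rw [e1, e2, Nat.add_mul_mod_self_right, Nat.add_mul_mod_self_right, Nat.mod_eq_of_lt ha, Nat.mod_eq_of_lt hb] at h2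
  exact h2

lemma g_bounds (m x : ℕ) (hx : x < 2*m+1) :
    m ≤ x + (x + (m+1)) % (2*m+1) ∧ x + (x + (m+1)) % (2*m+1) ≤ 3*m := by
  rw [shift_eq m x hx]; split <;> omega

lemma g_inj (m x y : ℕ) (hx : x < 2*m+1) (hy : y < 2*m+1)
    (h : x + (x + (m+1)) % (2*m+1) = y + (y + (m+1)) % (2*m+1)) : x = y := by
  rw [shift_eq m x hx, shift_eq m y hy] at h
  split at h <;> split at h <;> omega

lemma sum_ge_card' (n : ℕ) : ∀ (s : Finset ℕ), s.card = n → (∀ x ∈ s, 1 ≤ x) →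
    ∑ x ∈ Finset.Icc 1 n, x ≤ ∑ x ∈ s, x := by
  induction n with
  | zero => simp
  | succ n ih =>
    intro s hn h
    have hne : s.Nonempty := Finset.card_pos.mp (by omega)
    have hM := s.max'_mem hne
    have hMge : n + 1 ≤ s.max' hne := by
      have hsub : s ⊆ Finset.Icc 1 (s.max' hne) := fun x hx =>
        Finset.mem_Icc.mpr ⟨h x hx, s.le_max' x hx⟩
      have := Finset.card_le_card hsub
      simp only [Nat.card_Icc, hn] at this; omega
    have hcard : (s.erase (s.max' hne)).card = n := by
      rw [Finset.card_erase_of_mem hM, hn]; omega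
    have hsum : ∑ x ∈ s, x = s.max' hne + ∑ x ∈ s.erase (s.max' hne), x :=
      (Finset.add_sum_erase s id hM).symm
    have := ih (s.erase (s.max' hne)) hcard (fun x hx => h x (Finset.mem_of_mem_erase hx))
    rw [Finset.sum_Icc_succ_top (by omega), hsum]
    omega

lemma sum_ge_card (s : Finset ℕ) (h : ∀ x ∈ s, 1 ≤ x) :
    ∑ x ∈ Finset.Icc 1 s.card, x ≤ ∑ x ∈ s, x := sum_ge_card' s.card s rfl h

section
variable (n k c : ℕ) [NeZero n]

abbrev Vt := Fin n ⊕ Σ i : Fin n, Fin (if i.val = n - 1 then k + c else k)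

abbrev Gr : SimpleGraph (Vt n k c) := pendantCycle n (fun i => if i.val = n - 1 then k + c else k)

def EF : Finset (Sym2 (Vt n k c)) :=
  (Finset.univ.image fun i : Fin n => s(Sum.inl i, Sum.inl (i+1))) ∪
  (Finset.univ.image fun x : Σ i : Fin n, Fin (if i.val = n-1 then k+c else k) =>
    s(Sum.inr x, Sum.inl x.1))

variable (hn : 3 ≤ n)
include hn

lemma val_succ (i : Fin n) : ((i+1 : Fin n)).val = (i.val+1) % n := by
  have : (1 : Fin n).val = 1 := by
    rw [Fin.val_one']; exact Nat.mod_eq_of_lt (by omega)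
  rw [Fin.val_add, this]

lemma succ_mod (x : ℕ) (hx : x < n) : (x+1) % n = if x+1 = n then 0 else x+1 := by
  split
  · simp [*]
  · exact Nat.mod_eq_of_lt (by omega)

lemma cyc_inj : Function.Injective (fun i : Fin n => (s(Sum.inl i, Sum.inl (i+1)) : Sym2 (Vt n k c))) := by
  intro i j h
  simp only [Sym2.eq_iff] at h
  rcases h with ⟨h1, _⟩ | ⟨h1, h2⟩
  · exact Sum.inl_injective h1
  · exfalso
    have e1 : i.val = ((j+1 : Fin n)).val := congrArg Fin.val (Sum.inl_injective h1)
    have e2 : ((i+1 : Fin n)).val = j.val := congrArg Fin.val (Sum.inl_injective h2)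
    rw [val_succ n hn] at e1 e2
    rw [succ_mod n hn j.val j.isLt] at e1
    rw [succ_mod n hn i.val i.isLt] at e2
    have := i.isLt; have := j.isLt
    split at e1 <;> split at e2 <;> omega

lemma pend_inj : Function.Injective
    (fun x : Σ i : Fin n, Fin (if i.val = n-1 then k+c else k) =>
      (s(Sum.inr x, Sum.inl x.1) : Sym2 (Vt n k c))) := by
  intro x y h
  simp only [Sym2.eq_iff] at h
  rcases h with ⟨h1, _⟩ | ⟨h1, _⟩
  · exact Sum.inr_injective h1
  · exact absurd h1 (by simp)

lemma cyc_pend_ne (i : Fin n) (x : Σ i : Fin n, Fin (if i.val = n-1 then k+c else k)) :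
    (s(Sum.inl i, Sum.inl (i+1)) : Sym2 (Vt n k c)) ≠ s(Sum.inr x, Sum.inl x.1) := by
  intro h
  rcases Sym2.eq_iff.mp h with ⟨h1, _⟩ | ⟨_, h2⟩ <;> simp_all

lemma edgeSet_eq : (Gr n k c).edgeSet = ↑(EF n k c) := by
  ext e
  induction e with
  | _ a b =>
    rw [SimpleGraph.mem_edgeSet]
    constructor
    · intro hadj
      rcases hadj with ⟨hne, hr | hr⟩
      · rcases hr with ⟨i, j, rfl, rfl, hij⟩ | ⟨i, j, rfl, rfl⟩
        · have : j = i + 1 := by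
            apply Fin.ext; rw [val_succ n hn, hij]
          subst this
          exact Finset.mem_union_left _ (Finset.mem_image_of_mem _ (Finset.mem_univ i))
        · exact Finset.mem_union_right _ (by
            refine Finset.mem_image.mpr ⟨⟨i, j⟩, Finset.mem_univ _, rfl⟩)
      · rcases hr with ⟨i, j, rfl, rfl, hij⟩ | ⟨i, j, rfl, rfl⟩
        · have : j = i + 1 := by
            apply Fin.ext; rw [val_succ n hn, hij]
          subst this
          rw [Sym2.eq_swap]
          exact Finset.mem_union_left _ (Finset.mem_image_of_mem _ (Finset.mem_univ i))
        · rw [Sym2.eq_swap]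
          exact Finset.mem_union_right _ (by
            refine Finset.mem_image.mpr ⟨⟨i, j⟩, Finset.mem_univ _, rfl⟩)
    · intro he
      rcases Finset.mem_union.mp he with h | h
      · obtain ⟨i, -, hi⟩ := Finset.mem_image.mp h
        have hab : s(a, b) = s(Sum.inl i, Sum.inl (i+1)) := hi.symm
        have hne : (Sum.inl i : Vt n k c) ≠ Sum.inl (i+1) := by
          intro hcon
          have hv : i.val = ((i+1 : Fin n)).val := congrArg Fin.val (Sum.inl_injective hcon)
          rw [val_succ n hn, succ_mod n hn i.val i.isLt] at hv
          have hlt := i.isLt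
          split at hv <;> omega
        rw [Sym2.eq_iff] at hab
        rcases hab with ⟨rfl, rfl⟩ | ⟨rfl, rfl⟩
        · exact ⟨hne, Or.inl (Or.inl ⟨i, i+1, rfl, rfl, (val_succ n hn i).symm⟩)⟩
        · exact ⟨hne.symm, Or.inr (Or.inl ⟨i, i+1, rfl, rfl, (val_succ n hn i).symm⟩)⟩
      · obtain ⟨x, -, hx⟩ := Finset.mem_image.mp h
        have hab : s(a, b) = s(Sum.inr x, Sum.inl x.1) := hx.symm
        have hne : (Sum.inr x : Vt n k c) ≠ Sum.inl x.1 := by simp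
        rw [Sym2.eq_iff] at hab
        rcases hab with ⟨rfl, rfl⟩ | ⟨rfl, rfl⟩
        · exact ⟨hne, Or.inl (Or.inr ⟨x.1, x.2, by simp, rfl⟩)⟩
        · exact ⟨hne.symm, Or.inr (Or.inr ⟨x.1, x.2, by simp, rfl⟩)⟩

lemma sum_ki : ∑ i : Fin n, (if i.val = n - 1 then k + c else k) = n*k + c := by
  have : ∀ i : Fin n, (if i.val = n - 1 then k + c else k) = k + (if i.val = n-1 then c else 0) := by
    intro i; split <;> omega
  simp_rw [this, Finset.sum_add_distrib]
  have h2 : ∑ i : Fin n, (if i.val = n-1 then c else 0) = c := by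
    rw [Finset.sum_eq_single_of_mem (⟨n-1, by omega⟩ : Fin n) (Finset.mem_univ _)]
    · simp
    · intro b _ hb
      have : b.val ≠ n - 1 := fun hv => hb (Fin.ext (by simp [hv]))
      simp [this]
  rw [h2]
  simp [Finset.sum_const, mul_comm]

lemma card_Vt : Fintype.card (Vt n k c) = n*(k+1)+c := by
  simp only [Fintype.card_sum, Fintype.card_sigma, Fintype.card_fin]
  rw [sum_ki n k c hn]; ring

lemma card_EF : (EF n k c).card = n*(k+1)+c := by
  rw [EF, Finset.card_union_of_disjoint, Finset.card_image_of_injective _ (cyc_inj n k c hn),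
    Finset.card_image_of_injective _ (pend_inj n k c hn)]
  · simp only [Finset.card_univ, Fintype.card_fin, Fintype.card_sigma, Fintype.card_fin]
    rw [sum_ki n k c hn]; ring
  · rw [Finset.disjoint_left]
    intro e h1 h2
    obtain ⟨i, -, hi⟩ := Finset.mem_image.mp h1
    obtain ⟨x, -, hx⟩ := Finset.mem_image.mp h2
    exact cyc_pend_ne n k c hn i x (hi.symm ▸ hx.symm ▸ rfl)

lemma sum_EF (f : Sym2 (Vt n k c) → ℕ) :
    ∑ e ∈ EF n k c, f e = (∑ i : Fin n, f s(Sum.inl i, Sum.inl (i+1))) +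
      ∑ x : (Σ i : Fin n, Fin (if i.val = n-1 then k+c else k)), f s(Sum.inr x, Sum.inl x.1) := by
  rw [EF, Finset.sum_union, Finset.sum_image (fun a _ b _ h => cyc_inj n k c hn h),
    Finset.sum_image (fun a _ b _ h => pend_inj n k c hn h)]
  rw [Finset.disjoint_left]
  intro e h1 h2
  obtain ⟨i, -, hi⟩ := Finset.mem_image.mp h1
  obtain ⟨x, -, hx⟩ := Finset.mem_image.mp h2
  exact cyc_pend_ne n k c hn i x (hi.symm ▸ hx.symm ▸ rfl)

end

lemma sumIcc (N : ℕ) : 2 * ∑ x ∈ Finset.Icc 1 N, x = N*(N+1) := by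
  induction N with
  | zero => simp
  | succ n ih => rw [Finset.sum_Icc_succ_top (by omega)]; ring_nf; ring_nf at ih; omega


section lower
variable (n k c m : ℕ) [NeZero n]

lemma lower_bound (hm : n = 2*m+1) (hn : 3 ≤ n) (hc : 1 ≤ c)
    (hub : c*(n-3) < 2*n*(k+1))
    (fv : Vt n k c → ℕ) (fe : Sym2 (Vt n k c) → ℕ) (cf : ℕ)
    (h : IsSEMT (Gr n k c) fv fe cf) :
    2*(n*(k+1)+c) + m + 2 ≤ cf := by
  obtain ⟨hv, he, hmagic⟩ := h
  have hp3' : 3 ≤ n*(k+1)+c := by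
    have h1 : n*1 ≤ n*(k+1) := Nat.mul_le_mul_left n (by omega)
    simp only [mul_one] at h1
    linarith
  set p := n*(k+1)+c with hp
  have hp3 : 3 ≤ p := hp3'

  have hcard : Fintype.card (Vt n k c) = p := card_Vt n k c hn
  have hq : (Gr n k c).edgeSet.ncard = p := by
    rw [edgeSet_eq n k c hn, Set.ncard_coe_finset, card_EF n k c hn]
  -- vertex labels bounds
  have hfvmem : ∀ v : Vt n k c, 1 ≤ fv v ∧ fv v ≤ p := by
    intro v
    have := hv.1 (Set.mem_univ v)
    rw [Set.mem_Icc, hcard] at this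
    exact this
  have hfvinj : ∀ x ∈ (Finset.univ : Finset (Vt n k c)), ∀ y ∈ Finset.univ,
      fv x = fv y → x = y := fun x _ y _ hxy => hv.2.1 trivial trivial hxy
  -- vertex sum
  have himg : Finset.image fv Finset.univ = Finset.Icc 1 p := by
    apply Finset.eq_of_subset_of_card_le
    · intro y hy
      obtain ⟨v, -, rfl⟩ := Finset.mem_image.mp hy
      exact Finset.mem_Icc.mpr (hfvmem v)
    · rw [Finset.card_image_of_injOn (fun x _ y _ hxy => hv.2.1 trivial trivial hxy),
        Finset.card_univ, hcard, Nat.card_Icc]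
      omega
  have hsumV : ∑ v : Vt n k c, fv v = ∑ x ∈ Finset.Icc 1 p, x := by
    rw [← himg, Finset.sum_image hfvinj]
  -- edge labels
  have hEFmem : ∀ e ∈ EF n k c, e ∈ (Gr n k c).edgeSet := by
    intro e heE; rw [edgeSet_eq n k c hn]; exact_mod_cast heE
  have hfemem : ∀ e ∈ EF n k c, p + 1 ≤ fe e ∧ fe e ≤ 2*p := by
    intro e heE
    have := he.1 (hEFmem e heE)
    rw [Set.mem_Icc, hcard, hq] at this
    omega
  have hfeinj : ∀ x ∈ EF n k c, ∀ y ∈ EF n k c, fe x = fe y → x = y :=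
    fun x hx y hy hxy => he.2.1 (hEFmem x hx) (hEFmem y hy) hxy
  have himgE : Finset.image fe (EF n k c) = Finset.Icc (p+1) (2*p) := by
    apply Finset.eq_of_subset_of_card_le
    · intro y hy
      obtain ⟨e, heE, rfl⟩ := Finset.mem_image.mp hy
      exact Finset.mem_Icc.mpr (hfemem e heE)
    · rw [Finset.card_image_of_injOn (fun x hx y hy hxy => hfeinj x hx y hy hxy),
        card_EF n k c hn, Nat.card_Icc]
      omega
  have hsumE : ∑ e ∈ EF n k c, fe e = ∑ x ∈ Finset.Icc (p+1) (2*p), x := by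
    rw [← himgE, Finset.sum_image hfeinj]
  -- magic per edge
  have hmagicEF : ∀ e ∈ EF n k c,
      (Sym2.lift ⟨fun u v => fv u + fv v, fun u v => by ring⟩ : Sym2 (Vt n k c) → ℕ) e + fe e = cf := by
    intro e heE
    have hadj := hEFmem e heE
    induction e with
    | _ a b =>
      rw [SimpleGraph.mem_edgeSet] at hadj
      simpa using hmagic a b hadj
  -- total magic sum
  have htot : (∑ e ∈ EF n k c,
      (Sym2.lift ⟨fun u v => fv u + fv v, fun u v => by ring⟩ : Sym2 (Vt n k c) → ℕ) e)
      + ∑ e ∈ EF n k c, fe e = p * cf := by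
    rw [← Finset.sum_add_distrib, Finset.sum_congr rfl hmagicEF, Finset.sum_const,
      card_EF n k c hn, smul_eq_mul]
  -- split the endpoint sum
  set C := ∑ i : Fin n, fv (Sum.inl i) with hC
  set P := ∑ x : (Σ i : Fin n, Fin (if i.val = n-1 then k+c else k)), fv (Sum.inr x) with hP
  have hTsplit : ∑ v : Vt n k c, fv v = C + P := by
    rw [Fintype.sum_sum_type]
  have hshift : ∑ i : Fin n, fv (Sum.inl (i+1)) = C := by
    exact Fintype.sum_equiv (Equiv.addRight (1 : Fin n)) _ _ (fun i => rfl)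
  set K := ∑ x : (Σ i : Fin n, Fin (if i.val = n-1 then k+c else k)), fv (Sum.inl x.1) with hK
  have hsplit : ∑ e ∈ EF n k c,
      (Sym2.lift ⟨fun u v => fv u + fv v, fun u v => by ring⟩ : Sym2 (Vt n k c) → ℕ) e
      = C + (C + P) + K := by
    rw [sum_EF n k c hn]
    simp only [Sym2.lift_mk]
    rw [Finset.sum_add_distrib, Finset.sum_add_distrib, hshift]
    omega
  -- K ≥ k*C + c
  have hKval : K = k * C + c * fv (Sum.inl (⟨n-1, by omega⟩ : Fin n)) := by
    rw [hK, ← Finset.univ_sigma_univ, Finset.sum_sigma]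
    simp only [Finset.sum_const, Finset.card_univ, Fintype.card_fin, smul_eq_mul]
    have hterm : ∀ i : Fin n, (if i.val = n - 1 then k + c else k) * fv (Sum.inl i)
        = k * fv (Sum.inl i) + (if i.val = n-1 then c * fv (Sum.inl i) else 0) := by
      intro i; split <;> ring
    simp_rw [hterm]
    rw [Finset.sum_add_distrib, ← Finset.mul_sum]
    congr 1
    rw [Finset.sum_eq_single_of_mem (⟨n-1, by omega⟩ : Fin n) (Finset.mem_univ _)]
    · simp
    · intro b _ hb
      have : b.val ≠ n - 1 := fun hv => hb (Fin.ext (by simp [hv]))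
      simp [this]
  have hKge : k * C + c ≤ K := by
    rw [hKval]
    have := (hfvmem (Sum.inl (⟨n-1, by omega⟩ : Fin n))).1
    have : c * 1 ≤ c * fv (Sum.inl (⟨n-1, by omega⟩ : Fin n)) := Nat.mul_le_mul_left c this
    omega
  have hCge : ∑ x ∈ Finset.Icc 1 n, x ≤ C := by
    have hinj : ∀ x ∈ (Finset.univ : Finset (Fin n)), ∀ y ∈ Finset.univ,
        fv (Sum.inl x) = fv (Sum.inl y) → x = y := by
      intro x _ y _ hxy
      exact Sum.inl_injective (hv.2.1 trivial trivial hxy)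
    have hCimg : C = ∑ x ∈ Finset.image (fun i : Fin n => fv (Sum.inl i)) Finset.univ, x := by
      rw [Finset.sum_image hinj]
    have hcardi : (Finset.image (fun i : Fin n => fv (Sum.inl i)) Finset.univ).card = n := by
      rw [Finset.card_image_of_injOn (fun x hx y hy hxy => hinj x hx y hy hxy),
        Finset.card_univ, Fintype.card_fin]
    have := sum_ge_card (Finset.image (fun i : Fin n => fv (Sum.inl i)) Finset.univ)
      (by
        intro x hx
        obtain ⟨i, -, rfl⟩ := Finset.mem_image.mp hx
        exact (hfvmem (Sum.inl i)).1)
    rw [hcardi] at this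
    omega
  -- assemble
  set In := ∑ x ∈ Finset.Icc 1 n, x with hIn
  set Ip := ∑ x ∈ Finset.Icc 1 p, x with hIp
  set Iq := ∑ x ∈ Finset.Icc (p+1) (2*p), x with hIq
  have hfin : (k+1)*C + Ip + c + Iq ≤ p * cf := by
    have h1 : C + (C + P) + K + Iq = p * cf := by
      rw [← hsplit, ← hsumE]; exact htot
    have h2 : C + P = Ip := by rw [← hsumV, hTsplit]
    have hCC : (k+1)*C = k*C + C := by ring
    linarith [hKge]
  have hIpq : 2*Ip + 2*Iq = 2*p*(2*p+1) := by
    have h1 : Finset.Icc 1 p = Finset.Ioc 0 p := by rw [← Finset.Icc_add_one_left_eq_Ioc]; rfl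
    have h2 : Finset.Icc (p+1) (2*p) = Finset.Ioc p (2*p) := by rw [← Finset.Icc_add_one_left_eq_Ioc]
    have h12 : Finset.Icc 1 (2*p) = Finset.Ioc 0 (2*p) := by rw [← Finset.Icc_add_one_left_eq_Ioc]; rfl
    have h3 : Ip + Iq = ∑ x ∈ Finset.Icc 1 (2*p), x := by
      rw [hIp, hIq, h1, h2, h12]
      exact Finset.sum_Ioc_consecutive _ (by omega) (by omega)
    have h4 := sumIcc (2*p)
    omega
  have h2In := sumIcc n
  by_contra hcon
  push_neg at hcon
  have hcf : cf ≤ 2*p + m + 1 := by omega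
  have hmul : p * cf ≤ p * (2*p+m+1) := Nat.mul_le_mul_left p hcf
  have hdoubled : (k+1)*(n*(n+1)) + 2*c + 2*p*(2*p+1) ≤ 2*(p*(2*p+m+1)) := by
    have hCIn : (k+1)*In ≤ (k+1)*C := Nat.mul_le_mul_left _ hCge
    have hdin : 2*((k+1)*In) = (k+1)*(n*(n+1)) := by rw [← h2In]; ring
    linarith [hfin, hIpq, hmul, hCIn, hdin]
  have hid : (k+1)*(n*(n+1)) + 2*c + 2*p*(2*p+1) + 2*m*c
      = 2*(p*(2*p+m+1)) + 2*n*(k+1) + 2*c := by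
    rw [hp, hm]; ring
  have hkey : 2*n*(k+1) + 2*c ≤ 2*m*c := by linarith
  have hm1 : 1 ≤ m := by omega
  have hub2 : c*(2*m-2) < 2*n*(k+1) := by
    have : n - 3 = 2*m - 2 := by omega
    rwa [this] at hub
  have hexp : c*(2*m-2) + 2*c = 2*m*c := by
    have h5 : (2*m-2) + 2 = 2*m := by omega
    calc c*(2*m-2) + 2*c = c*((2*m-2)+2) := by ring
    _ = c*(2*m) := by rw [h5]
    _ = 2*m*c := by ring
  linarith
end lower

def fvD (n k c : ℕ) : Vt n k c → ℕ
  | Sum.inl i => (i.val * ((n+1)/2)) % n + 1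
  | Sum.inr ⟨i, j⟩ =>
      if i.val = n - 1 ∧ k ≤ j.val then n*(k+1) + (j.val - k) + 1
      else n*(j.val+1) + (i.val * ((n+1)/2) + (n+1)/2) % n + 1

def SD (n k c : ℕ) : Sym2 (Vt n k c) → ℕ :=
  Sym2.lift ⟨fun u v => fvD n k c u + fvD n k c v, fun u v => by ring⟩

def feD (n k c : ℕ) : Sym2 (Vt n k c) → ℕ := fun e =>
  2*(n*(k+1)+c) + (n+3)/2 - SD n k c e

lemma pilast (m : ℕ) : (2*m) * (m+1) % (2*m+1) = m := by
  have h : (2*m)*(m+1) = (2*m+1)*m + m := by ring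
  rw [h, Nat.mul_add_mod, Nat.mod_eq_of_lt (by omega)]

section constr
variable (m k c : ℕ)

lemma pi_lt (a : ℕ) : a*(m+1) % (2*m+1) < 2*m+1 := Nat.mod_lt _ (by omega)

lemma fvD_inl (i : Fin (2*m+1)) :
    fvD (2*m+1) k c (Sum.inl i) = i.val*(m+1) % (2*m+1) + 1 := by
  show (i.val * ((2*m+1+1)/2)) % (2*m+1) + 1 = _
  have hd : (2*m+1+1)/2 = m+1 := by omega
  rw [hd]

lemma fvD_extra (i : Fin (2*m+1)) (j : Fin (if i.val = 2*m+1-1 then k+c else k))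
    (h1 : i.val = 2*m+1-1) (h2 : k ≤ j.val) :
    fvD (2*m+1) k c (Sum.inr ⟨i, j⟩) = (2*m+1)*(k+1) + (j.val - k) + 1 := by
  show (if _ then _ else _) = _
  rw [if_pos ⟨h1, h2⟩]

lemma fvD_norm (i : Fin (2*m+1)) (j : Fin (if i.val = 2*m+1-1 then k+c else k))
    (h : ¬(i.val = 2*m+1-1 ∧ k ≤ j.val)) :
    fvD (2*m+1) k c (Sum.inr ⟨i, j⟩)
      = (2*m+1)*(j.val+1) + (i.val*(m+1) % (2*m+1) + (m+1)) % (2*m+1) + 1 := by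
  show (if _ then _ else _) = _
  rw [if_neg h, Nat.mod_add_mod]
  have hd : (2*m+1+1)/2 = m+1 := by omega
  rw [hd]

lemma norm_j_lt (i : Fin (2*m+1)) (j : Fin (if i.val = 2*m+1-1 then k+c else k))
    (h : ¬(i.val = 2*m+1-1 ∧ k ≤ j.val)) : j.val < k := by
  have hj := j.isLt
  by_cases hi : i.val = 2*m+1-1
  · have h2 : ¬ k ≤ j.val := fun hk => h ⟨hi, hk⟩
    omega
  · have he : (if (i.val:ℕ) = 2*m+1-1 then k+c else k) = k := if_neg hi
    omega

lemma fvD_inl_ub (i : Fin (2*m+1)) : fvD (2*m+1) k c (Sum.inl i) ≤ 2*m+1 := by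
  rw [fvD_inl]
  have := pi_lt m i.val
  omega

lemma fvD_inr_lb (i : Fin (2*m+1)) (j : Fin (if i.val = 2*m+1-1 then k+c else k)) :
    2*m+2 ≤ fvD (2*m+1) k c (Sum.inr ⟨i, j⟩) := by
  by_cases hcond : i.val = 2*m+1-1 ∧ k ≤ j.val
  · rw [fvD_extra m k c i j hcond.1 hcond.2]
    have h1 : (2*m+1)*1 ≤ (2*m+1)*(k+1) := Nat.mul_le_mul_left _ (by omega)
    omega
  · rw [fvD_norm m k c i j hcond]
    have h1 : (2*m+1)*1 ≤ (2*m+1)*(j.val+1) := Nat.mul_le_mul_left _ (by omega)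
    omega

lemma fvD_norm_ub (i : Fin (2*m+1)) (j : Fin (if i.val = 2*m+1-1 then k+c else k))
    (h : ¬(i.val = 2*m+1-1 ∧ k ≤ j.val)) :
    fvD (2*m+1) k c (Sum.inr ⟨i, j⟩) ≤ (2*m+1)*k + 2*m+1 := by
  rw [fvD_norm m k c i j h]
  have hjk := norm_j_lt m k c i j h
  have h1 : (2*m+1)*(j.val+1) ≤ (2*m+1)*k := Nat.mul_le_mul_left _ (by omega)
  have h3 := Nat.mod_lt (i.val*(m+1) % (2*m+1) + (m+1)) (show 0 < 2*m+1 by omega)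
  omega

lemma fvD_bounds (v : Vt (2*m+1) k c) :
    1 ≤ fvD (2*m+1) k c v ∧ fvD (2*m+1) k c v ≤ (2*m+1)*(k+1)+c := by
  rcases v with i | ⟨i, j⟩
  · refine ⟨by rw [fvD_inl]; omega, ?_⟩
    have h1 := fvD_inl_ub m k c i
    have h2 : (2*m+1)*1 ≤ (2*m+1)*(k+1) := Nat.mul_le_mul_left _ (by omega)
    omega
  · by_cases hcond : i.val = 2*m+1-1 ∧ k ≤ j.val
    · rw [fvD_extra m k c i j hcond.1 hcond.2]
      have hj := j.isLt
      have he : (if (i.val:ℕ) = 2*m+1-1 then k+c else k) = k+c := if_pos hcond.1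
      omega
    · have h1 := fvD_norm_ub m k c i j hcond
      have h2 := fvD_inr_lb m k c i j
      have h3 : (2*m+1)*(k+1) = (2*m+1)*k + (2*m+1) := by ring
      omega

lemma fvD_inj : Function.Injective (fvD (2*m+1) k c) := by
  have hn0 : 0 < 2*m+1 := by omega
  intro u v heq
  rcases u with i | ⟨i, j⟩ <;> rcases v with i' | ⟨i', j'⟩
  · rw [fvD_inl, fvD_inl] at heq
    exact congrArg Sum.inl (Fin.ext (pi_inj m i.val i'.val i.isLt i'.isLt (by omega)))
  · exfalso
    have h1 := fvD_inl_ub m k c i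
    have h2 := fvD_inr_lb m k c i' j'
    omega
  · exfalso
    have h1 := fvD_inl_ub m k c i'
    have h2 := fvD_inr_lb m k c i j
    omega
  · by_cases hc1 : i.val = 2*m+1-1 ∧ k ≤ j.val <;>
      by_cases hc2 : i'.val = 2*m+1-1 ∧ k ≤ j'.val
    · rw [fvD_extra m k c i j hc1.1 hc1.2, fvD_extra m k c i' j' hc2.1 hc2.2] at heq
      have hi : i = i' := Fin.ext (by rw [hc1.1, hc2.1])
      subst hi
      have hj : j = j' := Fin.ext (by omega)
      rw [hj]
    · exfalso
      rw [fvD_extra m k c i j hc1.1 hc1.2] at heq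
      have h1 := fvD_norm_ub m k c i' j' hc2
      have h3 : (2*m+1)*(k+1) = (2*m+1)*k + (2*m+1) := by ring
      omega
    · exfalso
      rw [fvD_extra m k c i' j' hc2.1 hc2.2] at heq
      have h1 := fvD_norm_ub m k c i j hc1
      have h3 : (2*m+1)*(k+1) = (2*m+1)*k + (2*m+1) := by ring
      omega
    · rw [fvD_norm m k c i j hc1, fvD_norm m k c i' j' hc2] at heq
      have ht1 : (i.val*(m+1) % (2*m+1) + (m+1)) % (2*m+1) < 2*m+1 := Nat.mod_lt _ hn0
      have ht2 : (i'.val*(m+1) % (2*m+1) + (m+1)) % (2*m+1) < 2*m+1 := Nat.mod_lt _ hn0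
      have heq' : (2*m+1)*(j.val+1) + (i.val*(m+1) % (2*m+1) + (m+1)) % (2*m+1)
          = (2*m+1)*(j'.val+1) + (i'.val*(m+1) % (2*m+1) + (m+1)) % (2*m+1) := by omega
      have hteq : (i.val*(m+1) % (2*m+1) + (m+1)) % (2*m+1)
          = (i'.val*(m+1) % (2*m+1) + (m+1)) % (2*m+1) := by
        have h2 : ((2*m+1)*(j.val+1) + (i.val*(m+1) % (2*m+1) + (m+1)) % (2*m+1)) % (2*m+1)
            = ((2*m+1)*(j'.val+1) + (i'.val*(m+1) % (2*m+1) + (m+1)) % (2*m+1)) % (2*m+1) := by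
          rw [heq']
        rwa [Nat.mul_add_mod, Nat.mul_add_mod, Nat.mod_eq_of_lt ht1, Nat.mod_eq_of_lt ht2] at h2
      have hpi : i.val*(m+1) % (2*m+1) = i'.val*(m+1) % (2*m+1) := by
        rw [shift_eq m _ (pi_lt m i.val), shift_eq m _ (pi_lt m i'.val)] at hteq
        have := pi_lt m i.val
        have := pi_lt m i'.val
        split at hteq <;> split at hteq <;> omega
      have hi : i = i' := Fin.ext (pi_inj m i.val i'.val i.isLt i'.isLt hpi)
      subst hi
      have hjv : (2*m+1)*(j.val+1) = (2*m+1)*(j'.val+1) := by omega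
      have hj : j = j' := Fin.ext (by
        have := Nat.eq_of_mul_eq_mul_left hn0 hjv
        omega)
      rw [hj]

lemma SD_mk (u v : Vt (2*m+1) k c) :
    SD (2*m+1) k c s(u, v) = fvD (2*m+1) k c u + fvD (2*m+1) k c v := by
  simp [SD]

lemma pisucc (hm1 : 1 ≤ m) (i : Fin (2*m+1)) :
    ((i+1 : Fin (2*m+1))).val*(m+1) % (2*m+1)
      = (i.val*(m+1) % (2*m+1) + (m+1)) % (2*m+1) := by
  rw [val_succ (2*m+1) (by omega) i, Nat.mod_add_mod, Nat.mod_mul_mod]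
  congr 1
  ring

lemma SD_cyc (hm1 : 1 ≤ m) (i : Fin (2*m+1)) :
    SD (2*m+1) k c s(Sum.inl i, Sum.inl (i+1))
      = (i.val*(m+1) % (2*m+1) + (i.val*(m+1) % (2*m+1) + (m+1)) % (2*m+1)) + 2 := by
  rw [SD_mk, fvD_inl, fvD_inl, pisucc m hm1]
  ring

lemma SD_norm (i : Fin (2*m+1)) (j : Fin (if i.val = 2*m+1-1 then k+c else k))
    (h : ¬(i.val = 2*m+1-1 ∧ k ≤ j.val)) :
    SD (2*m+1) k c s(Sum.inr ⟨i,j⟩, Sum.inl i)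
      = (2*m+1)*(j.val+1)
        + (i.val*(m+1) % (2*m+1) + (i.val*(m+1) % (2*m+1) + (m+1)) % (2*m+1)) + 2 := by
  rw [SD_mk, fvD_inl, fvD_norm m k c i j h]
  ring

lemma SD_extra (i : Fin (2*m+1)) (j : Fin (if i.val = 2*m+1-1 then k+c else k))
    (h1 : i.val = 2*m+1-1) (h2 : k ≤ j.val) :
    SD (2*m+1) k c s(Sum.inr ⟨i,j⟩, Sum.inl i)
      = (2*m+1)*(k+1) + (j.val - k) + m + 2 := by
  rw [SD_mk, fvD_inl, fvD_extra m k c i j h1 h2]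
  have hv : i.val * (m+1) % (2*m+1) = m := by
    have hv2 : i.val = 2*m := by omega
    rw [hv2, pilast m]
  rw [hv]
  ring

lemma SD_cyc_bounds (hm1 : 1 ≤ m) (i : Fin (2*m+1)) :
    m+2 ≤ SD (2*m+1) k c s(Sum.inl i, Sum.inl (i+1)) ∧
    SD (2*m+1) k c s(Sum.inl i, Sum.inl (i+1)) ≤ 3*m+2 := by
  rw [SD_cyc m k c hm1 i]
  have := g_bounds m _ (pi_lt m i.val)
  omega

lemma SD_pend_bounds (i : Fin (2*m+1)) (j : Fin (if i.val = 2*m+1-1 then k+c else k)) :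
    3*m+3 ≤ SD (2*m+1) k c s(Sum.inr ⟨i,j⟩, Sum.inl i) ∧
    SD (2*m+1) k c s(Sum.inr ⟨i,j⟩, Sum.inl i) ≤ (2*m+1)*(k+1)+c+m+1 := by
  have hN : (2*m+1)*(k+1) = (2*m+1)*k + (2*m+1) := by ring
  by_cases hcond : i.val = 2*m+1-1 ∧ k ≤ j.val
  · rw [SD_extra m k c i j hcond.1 hcond.2]
    have hj := j.isLt
    have he : (if (i.val:ℕ) = 2*m+1-1 then k+c else k) = k+c := if_pos hcond.1
    have h1 : (2*m+1)*1 ≤ (2*m+1)*(k+1) := Nat.mul_le_mul_left _ (by omega)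
    omega
  · rw [SD_norm m k c i j hcond]
    have hjk := norm_j_lt m k c i j hcond
    have h1 : (2*m+1)*1 ≤ (2*m+1)*(j.val+1) := Nat.mul_le_mul_left _ (by omega)
    have h2 : (2*m+1)*(j.val+1) ≤ (2*m+1)*k := Nat.mul_le_mul_left _ (by omega)
    have hg := g_bounds m _ (pi_lt m i.val)
    omega

lemma EF_rep (e : Sym2 (Vt (2*m+1) k c)) (he : e ∈ EF (2*m+1) k c) :
    (∃ i : Fin (2*m+1), e = s(Sum.inl i, Sum.inl (i+1))) ∨
    (∃ (i : Fin (2*m+1)) (j : Fin (if i.val = 2*m+1-1 then k+c else k)),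
      e = s(Sum.inr ⟨i, j⟩, Sum.inl i)) := by
  rcases Finset.mem_union.mp he with h | h
  · obtain ⟨i, -, hi⟩ := Finset.mem_image.mp h
    exact Or.inl ⟨i, hi.symm⟩
  · obtain ⟨x, -, hx⟩ := Finset.mem_image.mp h
    exact Or.inr ⟨x.1, x.2, hx.symm⟩

lemma SD_mem (hm1 : 1 ≤ m) (e : Sym2 (Vt (2*m+1) k c)) (he : e ∈ EF (2*m+1) k c) :
    m+2 ≤ SD (2*m+1) k c e ∧ SD (2*m+1) k c e ≤ (2*m+1)*(k+1)+c+m+1 := by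
  rcases EF_rep m k c e he with ⟨i, rfl⟩ | ⟨i, j, rfl⟩
  · have h1 := SD_cyc_bounds m k c hm1 i
    have h2 : (2*m+1)*1 ≤ (2*m+1)*(k+1) := Nat.mul_le_mul_left _ (by omega)
    omega
  · have h1 := SD_pend_bounds m k c i j
    omega

lemma SD_inj (hm1 : 1 ≤ m) : ∀ e ∈ EF (2*m+1) k c, ∀ e' ∈ EF (2*m+1) k c,
    SD (2*m+1) k c e = SD (2*m+1) k c e' → e = e' := by
  have hn0 : 0 < 2*m+1 := by omega
  have hN : (2*m+1)*(k+1) = (2*m+1)*k + (2*m+1) := by ring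
  intro e he e' he' heq
  rcases EF_rep m k c e he with ⟨i, rfl⟩ | ⟨i, j, rfl⟩ <;>
    rcases EF_rep m k c e' he' with ⟨i', rfl⟩ | ⟨i', j', rfl⟩
  · -- cyc cyc
    rw [SD_cyc m k c hm1 i, SD_cyc m k c hm1 i'] at heq
    have hg := g_inj m _ _ (pi_lt m i.val) (pi_lt m i'.val) (by omega)
    have hi : i = i' := Fin.ext (pi_inj m _ _ i.isLt i'.isLt hg)
    rw [hi]
  · exfalso
    have h1 := SD_cyc_bounds m k c hm1 i
    have h2 := SD_pend_bounds m k c i' j'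
    omega
  · exfalso
    have h1 := SD_cyc_bounds m k c hm1 i'
    have h2 := SD_pend_bounds m k c i j
    omega
  · -- pend pend
    by_cases hc1 : i.val = 2*m+1-1 ∧ k ≤ j.val <;>
      by_cases hc2 : i'.val = 2*m+1-1 ∧ k ≤ j'.val
    · rw [SD_extra m k c i j hc1.1 hc1.2, SD_extra m k c i' j' hc2.1 hc2.2] at heq
      have hi : i = i' := Fin.ext (by rw [hc1.1, hc2.1])
      subst hi
      have hj : j = j' := Fin.ext (by omega)
      rw [hj]
    · exfalso
      rw [SD_extra m k c i j hc1.1 hc1.2, SD_norm m k c i' j' hc2] at heq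
      have hjk := norm_j_lt m k c i' j' hc2
      have h2 : (2*m+1)*(j'.val+1) ≤ (2*m+1)*k := Nat.mul_le_mul_left _ (by omega)
      have hg := g_bounds m _ (pi_lt m i'.val)
      omega
    · exfalso
      rw [SD_extra m k c i' j' hc2.1 hc2.2, SD_norm m k c i j hc1] at heq
      have hjk := norm_j_lt m k c i j hc1
      have h2 : (2*m+1)*(j.val+1) ≤ (2*m+1)*k := Nat.mul_le_mul_left _ (by omega)
      have hg := g_bounds m _ (pi_lt m i.val)
      omega
    · rw [SD_norm m k c i j hc1, SD_norm m k c i' j' hc2] at heq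
      have hg1 := g_bounds m _ (pi_lt m i.val)
      have hg2 := g_bounds m _ (pi_lt m i'.val)
      have hjj : j.val = j'.val := by
        rcases Nat.lt_trichotomy j.val j'.val with h | h | h
        · exfalso
          have hmul : (2*m+1)*(j.val+2) ≤ (2*m+1)*(j'.val+1) := Nat.mul_le_mul_left _ (by omega)
          have hid : (2*m+1)*(j.val+2) = (2*m+1)*(j.val+1) + (2*m+1) := by ring
          omega
        · exact h
        · exfalso
          have hmul : (2*m+1)*(j'.val+2) ≤ (2*m+1)*(j.val+1) := Nat.mul_le_mul_left _ (by omega)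
          have hid : (2*m+1)*(j'.val+2) = (2*m+1)*(j'.val+1) + (2*m+1) := by ring
          omega
      have hA : (2*m+1)*(j.val+1) = (2*m+1)*(j'.val+1) := by rw [hjj]
      have hg : i.val*(m+1) % (2*m+1) + (i.val*(m+1) % (2*m+1) + (m+1)) % (2*m+1)
          = i'.val*(m+1) % (2*m+1) + (i'.val*(m+1) % (2*m+1) + (m+1)) % (2*m+1) := by omega
      have hpi := g_inj m _ _ (pi_lt m i.val) (pi_lt m i'.val) hg
      have hi : i = i' := Fin.ext (pi_inj m _ _ i.isLt i'.isLt hpi)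
      subst hi
      have hj : j = j' := Fin.ext hjj
      rw [hj]

end constr

lemma exists_semt (m k c : ℕ) (hm1 : 1 ≤ m) :
    IsSEMT (Gr (2*m+1) k c) (fvD (2*m+1) k c) (feD (2*m+1) k c)
      (2*((2*m+1)*(k+1)+c) + m + 2) := by
  have hn : 3 ≤ 2*m+1 := by omega
  have hcard : Fintype.card (Vt (2*m+1) k c) = (2*m+1)*(k+1)+c := card_Vt (2*m+1) k c hn
  have hq : (Gr (2*m+1) k c).edgeSet.ncard = (2*m+1)*(k+1)+c := by
    rw [edgeSet_eq (2*m+1) k c hn, Set.ncard_coe_finset, card_EF (2*m+1) k c hn]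
  have hdiv : (2*m+1+3)/2 = m+2 := by omega
  have hfe_eq : ∀ e, feD (2*m+1) k c e
      = 2*((2*m+1)*(k+1)+c) + m + 2 - SD (2*m+1) k c e := by
    intro e
    show 2*((2*m+1)*(k+1)+c) + (2*m+1+3)/2 - SD (2*m+1) k c e = _
    rw [hdiv]
    omega
  have hmem : ∀ e, e ∈ (Gr (2*m+1) k c).edgeSet ↔ e ∈ EF (2*m+1) k c := by
    intro e; rw [edgeSet_eq (2*m+1) k c hn]; exact Finset.mem_coe
  have hSmem := SD_mem m k c hm1
  have hfeinjEF : ∀ e1 ∈ EF (2*m+1) k c, ∀ e2 ∈ EF (2*m+1) k c,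
      feD (2*m+1) k c e1 = feD (2*m+1) k c e2 → e1 = e2 := by
    intro e1 h1 e2 h2 hfe
    rw [hfe_eq, hfe_eq] at hfe
    have b1 := hSmem e1 h1
    have b2 := hSmem e2 h2
    exact SD_inj m k c hm1 e1 h1 e2 h2 (by omega)
  refine ⟨?_, ?_, ?_⟩
  · rw [hcard]
    refine ⟨?_, ?_, ?_⟩
    · intro v _
      rw [Set.mem_Icc]
      exact fvD_bounds m k c v
    · intro u _ v _ h
      exact fvD_inj m k c h
    · intro y hy
      rw [Set.mem_Icc] at hy
      have himg : Finset.image (fvD (2*m+1) k c) Finset.univ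
          = Finset.Icc 1 ((2*m+1)*(k+1)+c) := by
        apply Finset.eq_of_subset_of_card_le
        · intro z hz
          obtain ⟨v, -, rfl⟩ := Finset.mem_image.mp hz
          exact Finset.mem_Icc.mpr (fvD_bounds m k c v)
        · rw [Finset.card_image_of_injective _ (fvD_inj m k c), Finset.card_univ, hcard,
            Nat.card_Icc]
          omega
      have hyi : y ∈ Finset.image (fvD (2*m+1) k c) Finset.univ := by
        rw [himg]; exact Finset.mem_Icc.mpr hy
      obtain ⟨v, -, hv⟩ := Finset.mem_image.mp hyi
      exact ⟨v, Set.mem_univ v, hv⟩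
  · rw [hcard, hq]
    refine ⟨?_, ?_, ?_⟩
    · intro e he
      rw [hmem] at he
      have h1 := hSmem e he
      rw [Set.mem_Icc, hfe_eq]
      omega
    · intro e1 h1 e2 h2 hfe
      rw [hmem] at h1 h2
      exact hfeinjEF e1 h1 e2 h2 hfe
    · intro y hy
      rw [Set.mem_Icc] at hy
      have himg : Finset.image (feD (2*m+1) k c) (EF (2*m+1) k c)
          = Finset.Icc ((2*m+1)*(k+1)+c+1) (2*((2*m+1)*(k+1)+c)) := by
        apply Finset.eq_of_subset_of_card_le
        · intro z hz
          obtain ⟨e, heE, rfl⟩ := Finset.mem_image.mp hz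
          have := hSmem e heE
          rw [Finset.mem_Icc, hfe_eq]
          omega
        · rw [Finset.card_image_of_injOn (fun e1 h1 e2 h2 h => hfeinjEF e1 h1 e2 h2 h),
            card_EF (2*m+1) k c hn, Nat.card_Icc]
          omega
      have hyE : y ∈ Finset.Icc ((2*m+1)*(k+1)+c+1) (2*((2*m+1)*(k+1)+c)) :=
        Finset.mem_Icc.mpr (by omega)
      rw [← himg] at hyE
      obtain ⟨e, heE, he⟩ := Finset.mem_image.mp hyE
      exact ⟨e, (hmem e).mpr heE, he⟩
  · intro u v _
    have hS : SD (2*m+1) k c s(u,v) = fvD (2*m+1) k c u + fvD (2*m+1) k c v := SD_mk m k c u v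
    have b1 := fvD_bounds m k c u
    have b2 := fvD_bounds m k c v
    rw [hfe_eq, hS]
    omega


/-- Lower bound: for `1 ≤ c` with `c(n-3) < 2n(k+1)`, every super edge-magic total labeling of
`G_{n,k,c}` has magic constant at least `2n(k+1) + 2c + (n+3)/2`; hence so does `sm(G_{n,k,c})`. -/
theorem stmt_12 (n k c : ℕ) (hn : 3 ≤ n) (ho : Odd n) (hc : 1 ≤ c)
    (hub : c * (n - 3) < 2 * n * (k + 1)) :
    (∀ (fv : (Fin n ⊕ Σ i : Fin n, Fin (if i.val = n - 1 then k + c else k)) → ℕ)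
        (fe : Sym2 (Fin n ⊕ Σ i : Fin n, Fin (if i.val = n - 1 then k + c else k)) → ℕ)
        (cf : ℕ),
        IsSEMT (pendantCycle n (fun i => if i.val = n - 1 then k + c else k)) fv fe cf →
        2 * n * (k + 1) + 2 * c + (n + 3) / 2 ≤ cf) ∧
    2 * n * (k + 1) + 2 * c + (n + 3) / 2 ≤
      sInf {cf | ∃ fv fe,
        IsSEMT (pendantCycle n (fun i => if i.val = n - 1 then k + c else k)) fv fe cf} := by
  obtain ⟨m, hm⟩ := ho
  subst hm
  haveI : NeZero (2*m+1) := ⟨by omega⟩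
  have hm1 : 1 ≤ m := by omega
  have hgoal_eq : 2*(2*m+1)*(k+1) + 2*c + (2*m+1+3)/2 = 2*((2*m+1)*(k+1)+c) + m + 2 := by
    have hdiv : (2*m+1+3)/2 = m+2 := by omega
    rw [hdiv]; ring
  have hlow : ∀ (fv : (Fin (2*m+1) ⊕ Σ i : Fin (2*m+1),
        Fin (if i.val = 2*m+1 - 1 then k + c else k)) → ℕ)
      (fe : Sym2 (Fin (2*m+1) ⊕ Σ i : Fin (2*m+1),
        Fin (if i.val = 2*m+1 - 1 then k + c else k)) → ℕ) (cf : ℕ),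
      IsSEMT (pendantCycle (2*m+1) (fun i => if i.val = 2*m+1 - 1 then k + c else k)) fv fe cf →
      2*(2*m+1)*(k+1) + 2*c + (2*m+1+3)/2 ≤ cf := by
    intro fv fe cf h
    rw [hgoal_eq]
    exact lower_bound (2*m+1) k c m rfl hn hc hub fv fe cf h
  refine ⟨hlow, ?_⟩
  have hne : {cf | ∃ fv fe,
      IsSEMT (pendantCycle (2*m+1) (fun i => if i.val = 2*m+1 - 1 then k + c else k))
        fv fe cf}.Nonempty :=
    ⟨2*((2*m+1)*(k+1)+c) + m + 2, fvD (2*m+1) k c, feD (2*m+1) k c, exists_semt m k c hm1⟩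
  obtain ⟨fv, fe, hsem⟩ := Nat.sInf_mem hne
  exact hlow fv fe _ hsem
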